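/- The WEAT effect size attains its extreme value ±2 if and only if c_1 = ... = c_m and c_{m+1} = ... = c_{2m} with c_1 ≠ c_{m+1}, i.e. all values within each group coincide. -/

import Mathlib

/-- The WEAT effect size attains ±2 iff both groups are constant (with distinct
values across groups). -/
theorem weat_effect_size_extremal_iff (m : ℕ) (hm : 0 < m) (c : ℕ → ℝ) (μ σ : ℝ)
    (hμ : μ = (∑ i ∈ Finset.range (2 * m), c i) / (2 * m))
    (hσ : σ = Real.sqrt ((∑ i ∈ Finset.range (2 * m), (c i - μ) ^ 2) / (2 * m)))
    (hσpos : 0 < σ) :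
    |((∑ i ∈ Finset.range m, c i) / m - (∑ i ∈ Finset.Ico m (2 * m), c i) / m) / σ| = 2 ↔
      ((∀ i < m, c i = c 0) ∧ (∀ i, m ≤ i → i < 2 * m → c i = c m) ∧ c 0 ≠ c m) := by
  have hM : (0:ℝ) < m := by exact_mod_cast hm
  have hMne : (m:ℝ) ≠ 0 := ne_of_gt hM
  set S1 := ∑ i ∈ Finset.range m, c i with hS1
  set S2 := ∑ i ∈ Finset.Ico m (2 * m), c i with hS2
  set a := S1 / (m:ℝ) with ha
  set b := S2 / (m:ℝ) with hb
  have hsplit : ∀ f : ℕ → ℝ, ∑ i ∈ Finset.range (2 * m), f i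
      = ∑ i ∈ Finset.range m, f i + ∑ i ∈ Finset.Ico m (2 * m), f i := by
    intro f
    rw [Finset.range_eq_Ico, ← Finset.sum_Ico_consecutive _ (Nat.zero_le m) (by omega),
      ← Finset.range_eq_Ico]
  have hμ' : μ = (a + b) / 2 := by
    rw [hμ, hsplit c, ha, hb, ← add_div, div_div]
    ring
  set V := ∑ i ∈ Finset.range (2 * m), (c i - μ) ^ 2 with hV
  set W1 := ∑ i ∈ Finset.range m, (c i - a) ^ 2 with hW1
  set W2 := ∑ i ∈ Finset.Ico m (2 * m), (c i - b) ^ 2 with hW2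
  have hsum1 : ∑ i ∈ Finset.range m, (c i - a) = 0 := by
    rw [Finset.sum_sub_distrib, Finset.sum_const, Finset.card_range, nsmul_eq_mul, ha]
    field_simp
    exact sub_self _
  have hcard2 : (Finset.Ico m (2 * m)).card = m := by
    rw [Nat.card_Ico]; omega
  have hsum2 : ∑ i ∈ Finset.Ico m (2 * m), (c i - b) = 0 := by
    rw [Finset.sum_sub_distrib, Finset.sum_const, hcard2, nsmul_eq_mul, hb]
    field_simp
    exact sub_self _
  have hA : ∑ i ∈ Finset.range m, (c i - μ)^2 = W1 + (m:ℝ) * (a - μ)^2 := by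
    have h1 : ∑ i ∈ Finset.range m, (c i - μ)^2
        = ∑ i ∈ Finset.range m, ((c i - a)^2 + 2*(a-μ)*(c i - a) + (a-μ)^2) := by
      refine Finset.sum_congr rfl fun i _ => by ring
    rw [h1, Finset.sum_add_distrib, Finset.sum_add_distrib, ← Finset.mul_sum, hsum1,
      Finset.sum_const, Finset.card_range, nsmul_eq_mul, ← hW1]
    ring
  have hB : ∑ i ∈ Finset.Ico m (2*m), (c i - μ)^2 = W2 + (m:ℝ) * (b - μ)^2 := by
    have h1 : ∑ i ∈ Finset.Ico m (2*m), (c i - μ)^2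
        = ∑ i ∈ Finset.Ico m (2*m), ((c i - b)^2 + 2*(b-μ)*(c i - b) + (b-μ)^2) := by
      refine Finset.sum_congr rfl fun i _ => by ring
    rw [h1, Finset.sum_add_distrib, Finset.sum_add_distrib, ← Finset.mul_sum, hsum2,
      Finset.sum_const, hcard2, nsmul_eq_mul, ← hW2]
    ring
  have hVid : V = W1 + W2 + (m:ℝ) * (a - b)^2 / 2 := by
    rw [hV, hsplit, hA, hB, hμ']; ring
  have hW1nn : 0 ≤ W1 := Finset.sum_nonneg fun i _ => sq_nonneg _
  have hW2nn : 0 ≤ W2 := Finset.sum_nonneg fun i _ => sq_nonneg _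
  have hVnn : 0 ≤ V := Finset.sum_nonneg fun i _ => sq_nonneg _
  have hσ2 : σ^2 = V / (2*(m:ℝ)) := by
    rw [hσ]
    exact Real.sq_sqrt (by positivity)
  have hV2 : 2 * (m:ℝ) * σ^2 = V := by
    rw [hσ2]; field_simp
  have habs : |(a - b)/σ| = 2 ↔ (a-b)^2 = 4*σ^2 := by
    rw [abs_div, abs_of_pos hσpos, div_eq_iff hσpos.ne']
    constructor
    · intro h
      rw [← sq_abs, h]; ring
    · intro h
      have h0 : (a - b - 2*σ) * (a - b + 2*σ) = 0 := by linear_combination h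
      rcases mul_eq_zero.1 h0 with h1 | h1
      · rw [abs_of_nonneg (by linarith : (0:ℝ) ≤ a - b)]; linarith
      · rw [abs_of_nonpos (by linarith : a - b ≤ 0)]; linarith
  have hkey : (a-b)^2 = 4*σ^2 ↔ W1 + W2 = 0 := by
    constructor
    · intro h
      have hmab : (m:ℝ) * (a-b)^2 = (m:ℝ) * (4*σ^2) := by rw [h]
      linear_combination (-1:ℝ)*hVid - hV2 - (1/2)*hmab
    · intro h
      have hV3 : V = (m:ℝ) * (a - b)^2 / 2 := by linarith
      have hmm : (m:ℝ) * (a-b)^2 = (m:ℝ) * (4*σ^2) := by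
        linear_combination (-2:ℝ)*hV3 - 2*hV2
      exact mul_left_cancel₀ hMne hmm
  have hW1zero : W1 = 0 ↔ ∀ i < m, c i = a := by
    rw [hW1, Finset.sum_eq_zero_iff_of_nonneg fun i _ => sq_nonneg _]
    constructor
    · intro h i hi
      have h2 := h i (Finset.mem_range.2 hi)
      have h3 := pow_eq_zero_iff (n := 2) (by norm_num) |>.1 h2
      linarith [sub_eq_zero.1 h3]
    · intro h i hi
      rw [h i (Finset.mem_range.1 hi)]; ring
  have hW2zero : W2 = 0 ↔ ∀ i, m ≤ i → i < 2*m → c i = b := by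
    rw [hW2, Finset.sum_eq_zero_iff_of_nonneg fun i _ => sq_nonneg _]
    constructor
    · intro h i hi1 hi2
      have h2 := h i (Finset.mem_Ico.2 ⟨hi1, hi2⟩)
      have h3 := pow_eq_zero_iff (n := 2) (by norm_num) |>.1 h2
      linarith [sub_eq_zero.1 h3]
    · intro h i hi
      rw [h i (Finset.mem_Ico.1 hi).1 (Finset.mem_Ico.1 hi).2]; ring
  rw [habs, hkey]
  constructor
  · intro h
    have hw1 : W1 = 0 := by linarith
    have hw2 : W2 = 0 := by linarith
    have hca := hW1zero.1 hw1
    have hcb := hW2zero.1 hw2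
    have hc0 : c 0 = a := hca 0 hm
    have hcm : c m = b := hcb m le_rfl (by omega)
    have hab : a ≠ b := by
      intro hab
      have hV0 : V = 0 := by rw [hVid, hw1, hw2, hab]; ring
      have hσ0 : σ^2 = 0 := by rw [hσ2, hV0]; simp
      nlinarith
    refine ⟨fun i hi => by rw [hca i hi, hc0], fun i h1 h2 => by rw [hcb i h1 h2, hcm], ?_⟩
    rw [hc0, hcm]; exact hab
  · rintro ⟨h1, h2, hne⟩
    have haS : S1 = m * c 0 := by
      rw [hS1, Finset.sum_congr rfl fun i hi => h1 i (Finset.mem_range.1 hi),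
        Finset.sum_const, Finset.card_range, nsmul_eq_mul]
    have hbS : S2 = m * c m := by
      rw [hS2, Finset.sum_congr rfl fun i hi => h2 i (Finset.mem_Ico.1 hi).1 (Finset.mem_Ico.1 hi).2,
        Finset.sum_const, hcard2, nsmul_eq_mul]
    have ha0 : a = c 0 := by rw [ha, haS]; field_simp
    have hbm : b = c m := by rw [hb, hbS]; field_simp
    have hw1 : W1 = 0 := hW1zero.2 fun i hi => by rw [h1 i hi, ha0]
    have hw2 : W2 = 0 := hW2zero.2 fun i hi1 hi2 => by rw [h2 i hi1 hi2, hbm]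
    linarith
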